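/- Let n ≥ 1 and let B ∈ ℝ^{n×n} be a matrix whose characteristic polynomial splits over ℝ and all of whose eigenvalues are nonzero (equivalently, B has only real eigenvalues and is nonsingular). Then there exist an integer L ≥ 1 and nonzero real numbers u(0), u(1), …, u(L) such that (I + u(L)B)(I + u(L−1)B)⋯(I + u(1)B)(I + u(0)B) = I if and only if every root of the minimal polynomial of B has multiplicity at most two in the minimal polynomial (equivalently, the dimension of the largest Jordan block in the Jordan canonical form of B is no greater than two). -/

import Mathlib

open Matrix MeasureTheory Polynomial

/-- The product `(I + u(l-1)B) ⋯ (I + u(1)B)(I + u(0)B)`. -/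
noncomputable def prodCtrl {n : ℕ} (B : Matrix (Fin n) (Fin n) ℝ) (l : ℕ) (u : ℕ → ℝ) :
    Matrix (Fin n) (Fin n) ℝ :=
  ((List.range l).reverse.map fun k => (1 : Matrix (Fin n) (Fin n) ℝ) + u k • B).prod

/-- `ξ` can be steered to `η` in the system `x(k+1) = (I + u(k)B) x(k)`. -/
noncomputable def steers {n : ℕ} (B : Matrix (Fin n) (Fin n) ℝ) (ξ η : Fin n → ℝ) : Prop :=
  ∃ l : ℕ, 1 ≤ l ∧ ∃ u : ℕ → ℝ, (prodCtrl B l u).mulVec ξ = η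

/-- Near-controllability: outside two Lebesgue-null sets, any state can be steered to any state. -/
noncomputable def nearlyControllable {n : ℕ} (B : Matrix (Fin n) (Fin n) ℝ) : Prop :=
  ∃ E F : Set (Fin n → ℝ), volume E = 0 ∧ volume F = 0 ∧
    ∀ ξ ∉ E, ∀ η ∉ F, steers B ξ η

/-- The matrix `[ξ, Bξ, B²ξ, …, B^{n-1}ξ]`. -/
noncomputable def ctrlMat {n : ℕ} (B : Matrix (Fin n) (Fin n) ℝ) (ξ : Fin n → ℝ) :
    Matrix (Fin n) (Fin n) ℝ :=
  Matrix.of fun i j => (B ^ (j : ℕ)).mulVec ξ i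

/-- The `N × N` Jordan block with eigenvalue `lam`. -/
def jordanBlock (N : ℕ) (lam : ℝ) : Matrix (Fin N) (Fin N) ℝ :=
  Matrix.of fun i j => if i = j then lam else if (j : ℕ) = (i : ℕ) + 1 then 1 else 0

/-- Block-diagonal Jordan matrix: `r` two-dimensional Jordan blocks with eigenvalues
`lam 0, …, lam (r-1)` followed by `1 × 1` blocks `lam r, …, lam (m-1)` (so `n = m + r`). -/
def pairJordan (n r : ℕ) (lam : ℕ → ℝ) : Matrix (Fin n) (Fin n) ℝ :=
  Matrix.of fun i j =>
    if (i : ℕ) = (j : ℕ) then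
      (if (i : ℕ) < 2 * r then lam ((i : ℕ) / 2) else lam ((i : ℕ) - r))
    else if (j : ℕ) = (i : ℕ) + 1 ∧ (i : ℕ) < 2 * r ∧ (i : ℕ) % 2 = 0 then 1 else 0


noncomputable def Ppoly (l : ℕ) (u : ℕ → ℝ) : ℝ[X] :=
  ((List.range l).reverse.map fun k => 1 + C (u k) * X).prod

lemma Ppoly_eq_prod (l : ℕ) (u : ℕ → ℝ) :
    Ppoly l u = ∏ k ∈ Finset.range l, (1 + C (u k) * X) := by
  rw [Ppoly, List.map_reverse, List.prod_reverse]
  rfl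

lemma aeval_Ppoly {n : ℕ} (B : Matrix (Fin n) (Fin n) ℝ) (l : ℕ) (u : ℕ → ℝ) :
    aeval B (Ppoly l u) = prodCtrl B l u := by
  rw [Ppoly, prodCtrl, map_list_prod, List.map_map]
  refine congrArg List.prod ?_
  refine List.map_congr_left fun k _ => ?_
  simp [Algebra.smul_def]

lemma coeff_prod_linear (S : Finset ℕ) (v : ℕ → ℝ) :
    (∏ k ∈ S, (1 + C (v k) * X)).coeff 0 = 1 ∧
    (∏ k ∈ S, (1 + C (v k) * X)).coeff 1 = ∑ k ∈ S, v k ∧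
    ((∏ k ∈ S, (1 + C (v k) * X)).coeff 1) ^ 2
        - 2 * (∏ k ∈ S, (1 + C (v k) * X)).coeff 2 = ∑ k ∈ S, (v k) ^ 2 := by
  induction S using Finset.cons_induction with
  | empty => simp [coeff_one]
  | cons a S ha ih =>
    obtain ⟨h0, h1, h2⟩ := ih
    rw [Finset.prod_cons, Finset.sum_cons, Finset.sum_cons]
    set Q := ∏ k ∈ S, (1 + C (v k) * X) with hQ
    have e0 : ((1 + C (v a) * X) * Q).coeff 0 = Q.coeff 0 := by
      simp [mul_coeff_zero]
    have ek : ∀ m : ℕ, ((1 + C (v a) * X) * Q).coeff (m + 1)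
        = Q.coeff (m + 1) + v a * Q.coeff m := by
      intro m
      rw [add_mul, one_mul, coeff_add, mul_assoc, coeff_C_mul, coeff_X_mul]
    refine ⟨by rw [e0, h0], by rw [ek 0, h1, h0]; ring, ?_⟩
    have e2 := ek 1
    rw [ek 0, e2, h0]
    nlinarith [h2]

lemma coeff_zero_prod_affine (S : Finset ℕ) (a b : ℕ → ℝ) :
    (∏ k ∈ S, (C (a k) + C (b k) * X)).coeff 0 = ∏ k ∈ S, a k := by
  induction S using Finset.cons_induction with
  | empty => simp [coeff_one]
  | cons c S hc ih =>
    rw [Finset.prod_cons, Finset.prod_cons, mul_coeff_zero, ih]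
    simp

lemma forward_dir {n : ℕ} (B : Matrix (Fin n) (Fin n) ℝ)
    (h : ∃ L : ℕ, 1 ≤ L ∧ ∃ u : ℕ → ℝ, (∀ k ≤ L, u k ≠ 0) ∧ prodCtrl B (L + 1) u = 1) :
    ∀ μ : ℝ, (minpoly ℝ B).rootMultiplicity μ ≤ 2 := by
  obtain ⟨L, hL, u, hu, hprod⟩ := h
  intro μ
  by_contra hcon
  push_neg at hcon
  have hdvd1 : minpoly ℝ B ∣ Ppoly (L + 1) u - 1 := by
    apply minpoly.dvd
    rw [map_sub, aeval_Ppoly, hprod, _root_.map_one, sub_self]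
  have h3 : (X - C μ) ^ 3 ∣ Ppoly (L + 1) u - 1 :=
    dvd_trans (dvd_trans (pow_dvd_pow _ hcon) (pow_rootMultiplicity_dvd _ μ)) hdvd1
  set φ := (aeval (X + C μ : ℝ[X]) : ℝ[X] →ₐ[ℝ] ℝ[X]) with hφ
  have hX3 : (X : ℝ[X]) ^ 3 ∣ φ (Ppoly (L + 1) u) - 1 := by
    have h4 := map_dvd φ h3
    rw [map_sub, _root_.map_one] at h4
    have h5 : φ ((X - C μ) ^ 3) = X ^ 3 := by
      rw [map_pow, map_sub, aeval_X, aeval_C]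
      simp [hφ, algebraMap_eq]
    rwa [h5] at h4
  set a : ℕ → ℝ := fun k => 1 + u k * μ with ha
  have hφP : φ (Ppoly (L + 1) u) = ∏ k ∈ Finset.range (L + 1), (C (a k) + C (u k) * X) := by
    rw [Ppoly_eq_prod, map_prod]
    refine Finset.prod_congr rfl fun k _ => ?_
    simp only [map_add, _root_.map_one, _root_.map_mul, aeval_X, aeval_C, hφ, C_add, C_mul,
      C_1, ha, algebraMap_eq]
    ring
  rw [hφP] at hX3
  rw [X_pow_dvd_iff] at hX3
  have hcoeff : ∀ d < 3, (∏ k ∈ Finset.range (L + 1), (C (a k) + C (u k) * X)).coeff d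
      = (1 : ℝ[X]).coeff d := by
    intro d hd
    have := hX3 d hd
    rw [coeff_sub, sub_eq_zero] at this
    exact this
  have hprod_a : ∏ k ∈ Finset.range (L + 1), a k = 1 := by
    have := hcoeff 0 (by norm_num)
    rwa [coeff_zero_prod_affine, coeff_one, if_pos rfl] at this
  have hane : ∀ k ∈ Finset.range (L + 1), a k ≠ 0 := by
    rw [← Finset.prod_ne_zero_iff, hprod_a]; norm_num
  set v : ℕ → ℝ := fun k => u k / a k with hv
  have hfac : (∏ k ∈ Finset.range (L + 1), (C (a k) + C (u k) * X))
      = ∏ k ∈ Finset.range (L + 1), (1 + C (v k) * X) := by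
    rw [show (∏ k ∈ Finset.range (L + 1), (C (a k) + C (u k) * X))
        = ∏ k ∈ Finset.range (L + 1), (C (a k) * (1 + C (v k) * X)) from
      Finset.prod_congr rfl fun k hk => by
        rw [mul_add, mul_one, ← mul_assoc, ← C_mul, mul_div_cancel₀ _ (hane k hk)],
      Finset.prod_mul_distrib, ← map_prod, hprod_a, C_1, one_mul]
  rw [hfac] at hcoeff
  obtain ⟨g0, g1, g2⟩ := coeff_prod_linear (Finset.range (L + 1)) v
  have hs1 : ∑ k ∈ Finset.range (L + 1), v k = 0 := by
    rw [← g1, hcoeff 1 (by norm_num), coeff_one]; norm_num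
  have hs2 : ∑ k ∈ Finset.range (L + 1), (v k) ^ 2 = 0 := by
    rw [← g2, g1, hs1, hcoeff 2 (by norm_num), coeff_one]; norm_num
  have hv0 : v 0 = 0 := by
    have h0mem : (0 : ℕ) ∈ Finset.range (L + 1) := by simp
    have := (Finset.sum_eq_zero_iff_of_nonneg fun k _ => sq_nonneg (v k)).mp hs2 0 h0mem
    exact pow_eq_zero_iff (by norm_num) |>.mp this
  have : u 0 = 0 := by
    rcases div_eq_zero_iff.mp hv0 with h | h
    · exact h
    · exact absurd h (hane 0 (by simp))
  exact hu 0 (Nat.zero_le L) this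

lemma splits_perturb (T : Finset ℝ) (hT : T.Nonempty) :
    ∃ ε : ℝ, 0 < ε ∧ ∀ c : ℝ, |c| < ε →
      ((∏ r ∈ T, (X - C r)) - C c).Splits := by
  classical
  set d := T.card with hd
  have hd1 : 1 ≤ d := hT.card_pos
  set l := T.sort (· ≤ ·) with hl
  have hlen : l.length = d := Finset.length_sort _
  set g : ℕ → ℝ := fun i => l.getD i 0 with hg
  have hsorted : List.Pairwise (· < ·) l := T.sortedLT_sort.pairwise
  have hgmono : ∀ i j, i < j → j < d → g i < g j := by
    intro i j hij hjd
    have hi : i < l.length := by omega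
    have hj : j < l.length := by omega
    have h := (List.pairwise_iff_get.mp hsorted) ⟨i, hi⟩ ⟨j, hj⟩ hij
    simp only [hg]
    rw [List.getD_eq_getElem l 0 hi, List.getD_eq_getElem l 0 hj]
    simpa using h
  have hgmono_le : ∀ i j, i ≤ j → j < d → g i ≤ g j := by
    intro i j hij hjd
    rcases eq_or_lt_of_le hij with rfl | h
    · exact le_rfl
    · exact (hgmono i j h hjd).le
  have hmem : ∀ i, i < d → g i ∈ T := by
    intro i hi
    have hi' : i < l.length := by omega
    rw [← Finset.mem_sort (α := ℝ) (· ≤ ·), ← hl]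
    show l.getD i 0 ∈ l
    rw [List.getD_eq_getElem l 0 hi']
    exact List.getElem_mem hi'
  have hsurj : ∀ r ∈ T, ∃ i, i < d ∧ g i = r := by
    intro r hr
    have : r ∈ l := by rw [hl, Finset.mem_sort]; exact hr
    obtain ⟨⟨i, hi⟩, hget⟩ := List.mem_iff_get.mp this
    refine ⟨i, by omega, ?_⟩
    show l.getD i 0 = r
    rw [List.getD_eq_getElem l 0 hi]
    simpa using hget
  set x : ℕ → ℝ := fun j =>
    if j = 0 then g 0 - 1 else if j < d then (g (j - 1) + g j) / 2 else g (d - 1) + 1 with hx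
  have hx0 : x 0 = g 0 - 1 := by simp [hx]
  have hxmid : ∀ j, j ≠ 0 → j < d → x j = (g (j - 1) + g j) / 2 := by
    intro j h1 h2; simp [hx, h1, h2]
  have hxtop : ∀ j, j ≠ 0 → ¬ j < d → x j = g (d - 1) + 1 := by
    intro j h1 h2; simp [hx, h1, h2]
  have hgx : ∀ i j, i < d → j ≤ d → (i < j → g i < x j) ∧ (j ≤ i → x j < g i) := by
    intro i j hi hj
    constructor
    · intro hij
      have hj0 : j ≠ 0 := by omega
      rcases Nat.lt_or_ge j d with hjd | hjd
      · have h1 : g i ≤ g (j - 1) := hgmono_le i (j - 1) (by omega) (by omega)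
        have h2 : g (j - 1) < g j := hgmono (j - 1) j (by omega) hjd
        rw [hxmid j hj0 hjd]; linarith
      · have h1 : g i ≤ g (d - 1) := hgmono_le i (d - 1) (by omega) (by omega)
        rw [hxtop j hj0 (by omega)]; linarith
    · intro hji
      rcases Nat.eq_zero_or_pos j with rfl | hj0
      · have h1 : g 0 ≤ g i := hgmono_le 0 i (by omega) hi
        rw [hx0]; linarith
      · have hjd : j < d := by omega
        have h1 : g j ≤ g i := hgmono_le j i hji hi
        have h2 : g (j - 1) < g j := hgmono (j - 1) j (by omega) hjd
        rw [hxmid j (by omega) hjd]; linarith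
  have hxsucc : ∀ j, j < d → x j < x (j + 1) := by
    intro j hj
    have h1 := (hgx j j hj (by omega)).2 le_rfl
    have h2 := (hgx j (j + 1) hj (by omega)).1 (by omega)
    linarith
  have hxmono : ∀ i j, i < j → j ≤ d → x i < x j := by
    intro i j hij hjd
    induction j with
    | zero => omega
    | succ m ih =>
      rcases Nat.lt_or_ge i m with h | h
      · exact lt_trans (ih h (by omega)) (hxsucc m (by omega))
      · have : i = m := by omega
        subst this
        exact hxsucc i (by omega)
  set f : Polynomial ℝ := ∏ r ∈ T, (X - C r) with hf
  have heval : ∀ y : ℝ, f.eval y = ∏ r ∈ T, (y - r) := by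
    intro y; rw [hf, eval_prod]; exact Finset.prod_congr rfl fun r _ => by simp
  have hsign : ∀ j, j ≤ d → ∃ p : ℝ, 0 < p ∧ f.eval (x j) = (-1) ^ (d - j) * p := by
    intro j hj
    have hiff : ∀ r ∈ T, (¬ r < x j ↔ x j < r) := by
      intro r hr
      obtain ⟨i, hi, rfl⟩ := hsurj r hr
      rcases Nat.lt_or_ge i j with h | h
      · have h2 := (hgx i j hi hj).1 h
        constructor
        · intro hc; exact absurd h2 hc
        · intro hc; linarith
      · have h2 := (hgx i j hi hj).2 h
        exact ⟨fun _ => h2, fun _ => by linarith⟩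
    have hsplit : f.eval (x j)
        = (∏ r ∈ T.filter (fun r => r < x j), (x j - r))
          * ∏ r ∈ T.filter (fun r => x j < r), (x j - r) := by
      rw [heval, ← Finset.prod_filter_mul_prod_filter_not T (fun r => r < x j)]
      congr 1
      apply Finset.prod_congr _ fun _ _ => rfl
      apply Finset.filter_congr
      intro r hr
      simpa using hiff r hr
    have hcard : (T.filter (fun r => x j < r)).card = d - j := by
      have himg : T.filter (fun r => x j < r) = (Finset.Ico j d).image g := by
        ext r
        simp only [Finset.mem_filter, Finset.mem_image, Finset.mem_Ico]
        constructor
        · rintro ⟨hrT, hxr⟩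
          obtain ⟨i, hi, rfl⟩ := hsurj r hrT
          refine ⟨i, ⟨?_, hi⟩, rfl⟩
          by_contra h
          have := (hgx i j hi hj).1 (by omega)
          linarith
        · rintro ⟨i, ⟨hji, hid⟩, rfl⟩
          exact ⟨hmem i hid, (hgx i j hid hj).2 hji⟩
      rw [himg, Finset.card_image_of_injOn, Nat.card_Ico]
      intro a ha b hb hab
      simp only [Finset.coe_Ico, Set.mem_Ico] at ha hb
      by_contra h
      rcases Nat.lt_or_ge a b with h' | h'
      · exact absurd hab (ne_of_lt (hgmono a b h' hb.2))
      · exact absurd hab.symm (ne_of_lt (hgmono b a (by omega) ha.2))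
    have hneg : ∏ r ∈ T.filter (fun r => x j < r), (x j - r)
        = (-1) ^ (d - j) * ∏ r ∈ T.filter (fun r => x j < r), (r - x j) := by
      rw [← hcard, ← Finset.prod_const, ← Finset.prod_mul_distrib]
      exact Finset.prod_congr rfl fun r _ => by ring
    refine ⟨(∏ r ∈ T.filter (fun r => r < x j), (x j - r))
      * ∏ r ∈ T.filter (fun r => x j < r), (r - x j), ?_, ?_⟩
    · apply mul_pos
      · exact Finset.prod_pos fun r hr => by
          simp only [Finset.mem_filter] at hr; linarith [hr.2]
      · exact Finset.prod_pos fun r hr => by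
          simp only [Finset.mem_filter] at hr; linarith [hr.2]
    · rw [hsplit, hneg]; ring
  have hne : (Finset.range (d + 1)).Nonempty := ⟨0, by simp⟩
  set ε := (Finset.range (d + 1)).inf' hne (fun j => |f.eval (x j)|) with hε
  have hεpos : 0 < ε := by
    rw [hε, Finset.lt_inf'_iff]
    intro j hj
    obtain ⟨p, hp, hev⟩ := hsign j (by simpa using Nat.lt_succ_iff.mp (Finset.mem_range.mp hj))
    rw [hev, abs_mul, abs_pow, abs_neg, abs_one, one_pow, one_mul]
    rwa [abs_of_pos hp]
  refine ⟨ε, hεpos, ?_⟩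
  intro c hc
  set F := f - C c with hF
  have hfdeg : f.natDegree = d := by
    rw [hf, natDegree_prod _ _ fun r _ => X_sub_C_ne_zero r]
    simp [hd]
  have hFdeg : F.natDegree = d := by rw [hF, natDegree_sub_C, hfdeg]
  have hFne : F ≠ 0 := by
    intro h
    rw [h, natDegree_zero] at hFdeg
    omega
  have hFsign : ∀ j, j ≤ d → 0 < (-1 : ℝ) ^ (d - j) * F.eval (x j) := by
    intro j hj
    obtain ⟨p, hp, hev⟩ := hsign j hj
    have hple : ε ≤ p := by
      have h1 : ε ≤ |f.eval (x j)| :=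
        Finset.inf'_le _ (Finset.mem_range.mpr (by omega))
      rwa [hev, abs_mul, abs_pow, abs_neg, abs_one, one_pow, one_mul, abs_of_pos hp] at h1
    have hFev : F.eval (x j) = (-1) ^ (d - j) * p - c := by
      rw [hF, eval_sub, eval_C, hev]
    rw [hFev]
    have habs : |(-1 : ℝ) ^ (d - j) * c| = |c| := by
      rw [abs_mul, abs_pow, abs_neg, abs_one, one_pow, one_mul]
    have h2 : (-1 : ℝ) ^ (d - j) * c ≤ |c| := by
      rw [← habs]; exact le_abs_self _
    have h3 : ((-1 : ℝ) ^ (d - j)) * ((-1 : ℝ) ^ (d - j)) = 1 := by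
      rw [← pow_add]
      exact (neg_one_pow_eq_one_iff_even (by norm_num)).mpr ⟨d - j, by ring⟩
    calc (0:ℝ) < p - |c| := by linarith
    _ ≤ p - (-1 : ℝ) ^ (d - j) * c := by linarith
    _ = (-1 : ℝ) ^ (d - j) * ((-1) ^ (d - j) * p - c) := by
        rw [mul_sub, ← mul_assoc, h3, one_mul]
  have hroot : ∀ j, j < d → ∃ ρ, ρ ∈ Set.Ioo (x j) (x (j + 1)) ∧ F.eval ρ = 0 := by
    intro j hj
    have h1 := hFsign j (by omega)
    have h2 := hFsign (j + 1) (by omega)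
    have hcont : ContinuousOn (fun y => F.eval y) (Set.Icc (x j) (x (j + 1))) :=
      (Polynomial.continuous F).continuousOn
    have hxlt : x j ≤ x (j + 1) := (hxsucc j hj).le
    have hk : d - j = (d - (j + 1)) + 1 := by omega
    rcases Nat.even_or_odd (d - (j + 1)) with hk2 | hk2
    · have e2 : (-1 : ℝ) ^ (d - (j + 1)) = 1 := hk2.neg_one_pow
      have e1 : (-1 : ℝ) ^ (d - j) = -1 := by rw [hk, pow_succ, e2]; norm_num
      rw [e1] at h1
      rw [e2] at h2
      have h1' : F.eval (x j) < 0 := by linarith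
      have h2' : 0 < F.eval (x (j + 1)) := by linarith
      obtain ⟨ρ, hρ, hρ0⟩ := intermediate_value_Ioo hxlt hcont (Set.mem_Ioo.mpr ⟨h1', h2'⟩)
      exact ⟨ρ, hρ, hρ0⟩
    · have e2 : (-1 : ℝ) ^ (d - (j + 1)) = -1 := hk2.neg_one_pow
      have e1 : (-1 : ℝ) ^ (d - j) = 1 := by rw [hk, pow_succ, e2]; norm_num
      rw [e1] at h1
      rw [e2] at h2
      have h1' : 0 < F.eval (x j) := by linarith
      have h2' : F.eval (x (j + 1)) < 0 := by linarith
      obtain ⟨ρ, hρ, hρ0⟩ := intermediate_value_Ioo' hxlt hcont (Set.mem_Ioo.mpr ⟨h2', h1'⟩)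
      exact ⟨ρ, hρ, hρ0⟩
  choose ρ hρmem hρ0 using hroot
  set ρ' : ℕ → ℝ := fun j => if h : j < d then ρ j h else 0 with hρ'
  have hρ'eq : ∀ j (h : j < d), ρ' j = ρ j h := by
    intro j h; simp only [hρ']; rw [dif_pos h]
  have hkey : ∀ a b, a < b → b < d → ρ' a < ρ' b := by
    intro a b h hb
    have ha : a < d := by omega
    have h1 : ρ' a < x (a + 1) := by rw [hρ'eq a ha]; exact (hρmem a ha).2
    have h2 : x (a + 1) ≤ x b := by
      rcases Nat.lt_or_ge (a + 1) b with h' | h'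
      · exact (hxmono (a + 1) b h' (by omega)).le
      · have : a + 1 = b := by omega
        rw [this]
    have h3 : x b < ρ' b := by rw [hρ'eq b hb]; exact (hρmem b hb).1
    linarith
  have hinj : Set.InjOn ρ' ↑(Finset.range d) := by
    intro a ha b hb hab
    simp only [Finset.coe_range, Set.mem_Iio] at ha hb
    by_contra hne'
    rcases Nat.lt_or_ge a b with h' | h'
    · exact absurd hab (ne_of_lt (hkey a b h' hb))
    · exact absurd hab.symm (ne_of_lt (hkey b a (by omega) ha))
  have hmaps : ∀ j ∈ Finset.range d, ρ' j ∈ F.roots.toFinset := by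
    intro j hj
    have hj' := Finset.mem_range.mp hj
    rw [Multiset.mem_toFinset, mem_roots']
    refine ⟨hFne, ?_⟩
    rw [IsRoot, hρ'eq j hj']
    exact hρ0 j hj'
  have hcard1 : d ≤ F.roots.toFinset.card := by
    have := Finset.card_le_card_of_injOn ρ' hmaps hinj
    simpa using this
  have hcard2 : Multiset.card F.roots = F.natDegree := by
    refine le_antisymm (card_roots' F) ?_
    rw [hFdeg]
    exact le_trans hcard1 (Multiset.toFinset_card_le _)
  exact splits_iff_card_roots.mpr hcard2

lemma reverse_dir {n : ℕ} (B : Matrix (Fin n) (Fin n) ℝ)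
    (hsplit : B.charpoly.Splits)
    (hmult : ∀ μ : ℝ, (minpoly ℝ B).rootMultiplicity μ ≤ 2) :
    ∃ L : ℕ, 1 ≤ L ∧ ∃ u : ℕ → ℝ, (∀ k ≤ L, u k ≠ 0) ∧ prodCtrl B (L + 1) u = 1 := by
  classical
  have hint : IsIntegral ℝ B := Algebra.IsIntegral.isIntegral B
  set m := minpoly ℝ B with hm
  have hm_monic : m.Monic := minpoly.monic hint
  have hm_ne : m ≠ 0 := hm_monic.ne_zero
  have hm_splits : m.Splits :=
    Splits.of_dvd hsplit (Matrix.charpoly_monic B).ne_zero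
      (Matrix.minpoly_dvd_charpoly B)
  set T : Finset ℝ := insert (0 : ℝ) m.roots.toFinset with hT
  have hTne : T.Nonempty := ⟨0, Finset.mem_insert_self _ _⟩
  set d := T.card with hdDef
  have hd1 : 1 ≤ d := hTne.card_pos
  set s : ℝ[X] := ∏ r ∈ T, (X - C r) with hs
  have hs_monic : s.Monic := monic_prod_of_monic _ _ fun r _ => monic_X_sub_C r
  have hsdeg : s.natDegree = d := by
    rw [hs, natDegree_prod _ _ fun r _ => X_sub_C_ne_zero r]
    simp [hdDef]
  have hs0 : s.eval 0 = 0 := by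
    rw [hs, eval_prod]
    apply Finset.prod_eq_zero (Finset.mem_insert_self (0:ℝ) _)
    simp
  have hdvd : m ∣ s ^ 2 := by
    have hfac : m = (m.roots.map fun a => X - C a).prod :=
      hm_splits.eq_prod_roots_of_monic hm_monic
    have hsfac : s ^ 2 = ((T.val + T.val).map fun a => X - C a).prod := by
      rw [Multiset.map_add, Multiset.prod_add, hs, sq]
      congr 1 <;> rw [Finset.prod_eq_multiset_prod]
    have hle : m.roots ≤ T.val + T.val := by
      rw [Multiset.le_iff_count]
      intro a
      rcases Classical.em (a ∈ m.roots) with ha | ha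
      · have h1 : Multiset.count a m.roots ≤ 2 := by
          rw [count_roots]; exact hmult a
        have h2 : a ∈ T.val := by
          rw [hT]
          exact Finset.mem_insert_of_mem (Multiset.mem_toFinset.mpr ha)
        rw [Multiset.count_add, Multiset.count_eq_one_of_mem T.nodup h2]
        omega
      · rw [Multiset.count_eq_zero_of_notMem ha]
        exact Nat.zero_le _
    rw [hfac, hsfac]
    exact Multiset.prod_dvd_prod_of_le (Multiset.map_le_map hle)
  obtain ⟨ε, hεpos, hsp⟩ := splits_perturb T hTne
  set w : ℝ := ε / 2 with hw
  have hwpos : 0 < w := by rw [hw]; positivity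
  have hwne : w ≠ 0 := ne_of_gt hwpos
  have hwabs : |w| < ε := by rw [hw, abs_of_pos hwpos]; linarith
  have hwabs' : |(-w)| < ε := by rwa [abs_neg]
  set q1 : ℝ[X] := s - C w with hq1
  set q2 : ℝ[X] := s + C w with hq2
  have hsp1 : q1.Splits := hsp w hwabs
  have hsp2 : q2.Splits := by
    have := hsp (-w) hwabs'
    rwa [map_neg, sub_neg_eq_add] at this
  have hdegpos : (0 : WithBot ℕ) < s.degree := by
    rw [← natDegree_pos_iff_degree_pos, hsdeg]; omega
  have hq1m : q1.Monic := hs_monic.sub_of_left (lt_of_le_of_lt degree_C_le hdegpos)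
  have hq2m : q2.Monic := by
    have := hs_monic.sub_of_left (q := -C w)
      (by rw [degree_neg]; exact lt_of_le_of_lt degree_C_le hdegpos)
    simpa [hq2, sub_neg_eq_add] using this
  have hq1deg : q1.natDegree = d := by rw [hq1, natDegree_sub_C, hsdeg]
  have hq2deg : q2.natDegree = d := by
    rw [hq2, ← sub_neg_eq_add, ← map_neg C, natDegree_sub_C, hsdeg]
  set R1 := q1.roots with hR1
  set R2 := q2.roots with hR2
  have hR1card : Multiset.card R1 = d := by
    rw [hR1, splits_iff_card_roots.mp hsp1, hq1deg]
  have hR2card : Multiset.card R2 = d := by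
    rw [hR2, splits_iff_card_roots.mp hsp2, hq2deg]
  have hq1fac : q1 = (R1.map fun a => X - C a).prod :=
    hsp1.eq_prod_roots_of_monic hq1m
  have hq2fac : q2 = (R2.map fun a => X - C a).prod :=
    hsp2.eq_prod_roots_of_monic hq2m
  set R := R1 + R2 with hR
  have hRne0 : ∀ ρ ∈ R, ρ ≠ 0 := by
    intro ρ hρ
    rw [hR, Multiset.mem_add] at hρ
    rcases hρ with hρ | hρ
    · intro h0
      have := (mem_roots'.mp hρ).2
      rw [IsRoot, h0, hq1, eval_sub, eval_C, hs0] at this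
      exact hwne (by linarith)
    · intro h0
      have := (mem_roots'.mp hρ).2
      rw [IsRoot, h0, hq2, eval_add, eval_C, hs0] at this
      exact hwne (by linarith)
  -- the product of the roots
  have hprodR : (R.map fun ρ => -ρ).prod = -(w * w) := by
    have e1 : q1.eval 0 = -w := by rw [hq1, eval_sub, eval_C, hs0]; ring
    have e2 : q2.eval 0 = w := by rw [hq2, eval_add, eval_C, hs0]; ring
    have f1 : (R1.map fun ρ => -ρ).prod = -w := by
      rw [← e1, hq1fac, eval_multiset_prod, Multiset.map_map]
      congr 1
      refine Multiset.map_congr rfl fun ρ _ => ?_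
      simp
    have f2 : (R2.map fun ρ => -ρ).prod = w := by
      rw [← e2, hq2fac, eval_multiset_prod, Multiset.map_map]
      congr 1
      refine Multiset.map_congr rfl fun ρ _ => ?_
      simp
    rw [hR, Multiset.map_add, Multiset.prod_add, f1, f2]
    ring
  set p : ℝ[X] := (R.map fun ρ => 1 - C ρ⁻¹ * X).prod with hp
  have hKval : (R.map fun ρ => -ρ⁻¹).prod = -(w * w)⁻¹ := by
    have : (R.map fun ρ => -ρ⁻¹).prod = (R.map fun ρ => (-ρ)⁻¹).prod := by
      refine congrArg Multiset.prod (Multiset.map_congr rfl fun ρ _ => ?_)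
      rw [inv_neg]
    rw [this, Multiset.prod_map_inv, hprodR, inv_neg]
  have hpfac : p = C (-(w * w)⁻¹) * (q1 * q2) := by
    rw [hp]
    have step1 : (R.map fun ρ => 1 - C ρ⁻¹ * X).prod
        = (R.map fun ρ => C (-ρ⁻¹) * (X - C ρ)).prod := by
      refine congrArg Multiset.prod (Multiset.map_congr rfl fun ρ hρ => ?_)
      have hρ0 : ρ ≠ 0 := hRne0 ρ hρ
      have hmulinv : C ρ⁻¹ * C ρ = (1 : ℝ[X]) := by
        rw [← C_mul, inv_mul_cancel₀ hρ0, C_1]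
      rw [map_neg]
      linear_combination -hmulinv
    have hCK : (R.map fun ρ => C (-ρ⁻¹)).prod = C (-(w * w)⁻¹) := by
      have hmp := map_multiset_prod (C : ℝ →+* ℝ[X]) (R.map fun ρ => -ρ⁻¹)
      rw [Multiset.map_map, hKval] at hmp
      simpa [Function.comp] using hmp.symm
    rw [step1, Multiset.prod_map_mul, hCK]
    congr 1
    rw [hR, Multiset.map_add, Multiset.prod_add, ← hq1fac, ← hq2fac]
  have hq1q2 : q1 * q2 = s ^ 2 - C (w * w) := by
    rw [hq1, hq2, C_mul]; ring
  have hpeq : p = 1 - C ((w * w)⁻¹) * s ^ 2 := by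
    have hww : (-(w * w)⁻¹) * (w * w) = -1 := by
      field_simp
    rw [hpfac, hq1q2, mul_sub, ← C_mul, hww, map_neg, map_neg, C_1]
    ring
  have haeval : aeval B p = 1 := by
    have h1 : m ∣ C ((w * w)⁻¹) * s ^ 2 := dvd_mul_of_dvd_right hdvd _
    obtain ⟨q, hq⟩ := h1
    have hz : aeval B (C ((w * w)⁻¹) * s ^ 2) = 0 := by
      rw [hq, _root_.map_mul]
      have hmz : aeval B m = 0 := minpoly.aeval ℝ B
      rw [hmz, zero_mul]
    rw [hpeq, map_sub, _root_.map_one, hz, sub_zero]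
  -- package into prodCtrl
  set ρs := R.toList with hρs
  have hρslen : ρs.length = 2 * d := by
    rw [hρs, Multiset.length_toList, hR, Multiset.card_add, hR1card, hR2card]
    omega
  set u : ℕ → ℝ := fun k => -(ρs.getD k 1)⁻¹ with hu
  have hune : ∀ k, u k ≠ 0 := by
    intro k
    simp only [hu]
    rcases Nat.lt_or_ge k ρs.length with h | h
    · rw [List.getD_eq_getElem ρs 1 h]
      have : ρs[k] ∈ ρs := List.getElem_mem h
      have h0 : ρs[k] ≠ 0 := hRne0 _ (Multiset.mem_toList.mp this)
      simp [h0]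
    · rw [List.getD_eq_default ρs 1 h]
      norm_num
  refine ⟨2 * d - 1, by omega, u, fun k _ => hune k, ?_⟩
  have h2d : 2 * d - 1 + 1 = 2 * d := by omega
  rw [h2d, ← aeval_Ppoly]
  have hPeq : Ppoly (2 * d) u = p := by
    rw [Ppoly, List.map_reverse, List.prod_reverse]
    have hlist : (List.range (2 * d)).map (fun k => 1 + C (u k) * X)
        = ρs.map fun ρ => 1 - C ρ⁻¹ * X := by
      apply List.ext_getElem
      · simp [hρslen]
      · intro i h1 h2
        simp only [List.getElem_map, List.getElem_range]
        simp only [hu]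
        have hi : i < ρs.length := by simpa using h2
        rw [List.getD_eq_getElem ρs 1 hi]
        rw [map_neg, neg_mul, ← sub_eq_add_neg]
    rw [hlist, hp, ← Multiset.coe_toList R, ← hρs, Multiset.map_coe, Multiset.prod_coe]
  rw [hPeq, haeval]


/-- existence of nonzero reals `u(0), …, u(L)` (with `L ≥ 1`) with
`(I + u(L)B)⋯(I + u(0)B) = I` iff every root of the minimal polynomial of `B`
has multiplicity at most two. -/
theorem stmt0 {n : ℕ} (hn : 1 ≤ n) (B : Matrix (Fin n) (Fin n) ℝ)
    (hsplit : B.charpoly.Splits) (hdet : B.det ≠ 0) :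
    (∃ L : ℕ, 1 ≤ L ∧ ∃ u : ℕ → ℝ, (∀ k ≤ L, u k ≠ 0) ∧ prodCtrl B (L + 1) u = 1) ↔
      ∀ μ : ℝ, (minpoly ℝ B).rootMultiplicity μ ≤ 2 := by
  constructor
  · exact forward_dir B
  · exact fun h => reverse_dir B hsplit h
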